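/- For all integers a, b, c ≥ 5 and every d with 1 ≤ d ≤ 2c−3, in the graph FCS_{a,b,c} the vertices u_{1,2} and r_{1,2} satisfy d(u_{1,2}, p_{1,1}) = d(r_{1,2}, p_{1,1}) and d(u_{1,2}, t_{1,d}) = d(r_{1,2}, t_{1,d}); consequently the set {p_{1,1}, t_{1,d}} is not a metric generator for FCS_{a,b,c}. -/
import Mathlib


/-- Vertex labels of the zigzag-edge coronoid fused with starphene `FCS_{a,b,c}`. -/
inductive FCSV : Type
  | p1 (d : ℕ) | p2 (d : ℕ) | p3 (d : ℕ)
  | q1 (d : ℕ) | q2 (d : ℕ) | q3 (d : ℕ)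
  | r1 (d : ℕ) | r2 (d : ℕ) | r3 (d : ℕ)
  | s1 (d : ℕ) | s2 (d : ℕ) | s3 (d : ℕ)
  | t1 (d : ℕ) | t2 (d : ℕ) | t3 (d : ℕ)
  | u1 (d : ℕ) | u2 (d : ℕ) | u3 (d : ℕ)

/-- Membership in the vertex set of `FCS_{a,b,c}`. -/
def FCSvalid (a b c : ℕ) : FCSV → Prop
  | .p1 d => 1 ≤ d ∧ d ≤ 2*a-1
  | .p2 d => 1 ≤ d ∧ d ≤ 2*a-1
  | .p3 d => 1 ≤ d ∧ d ≤ 2*a-5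
  | .q1 d => 1 ≤ d ∧ d ≤ 2*c-1
  | .q2 d => 1 ≤ d ∧ d ≤ 2*c-1
  | .q3 d => 1 ≤ d ∧ d ≤ 2*c-5
  | .r1 d => 1 ≤ d ∧ d ≤ 2*b-1
  | .r2 d => 1 ≤ d ∧ d ≤ 2*b-1
  | .r3 d => 1 ≤ d ∧ d ≤ 2*b-5
  | .s1 d => 1 ≤ d ∧ d ≤ 2*a-3
  | .s2 d => 1 ≤ d ∧ d ≤ 2*a-3
  | .s3 d => 1 ≤ d ∧ d ≤ 2*a-5
  | .t1 d => 1 ≤ d ∧ d ≤ 2*c-3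
  | .t2 d => 1 ≤ d ∧ d ≤ 2*c-3
  | .t3 d => 1 ≤ d ∧ d ≤ 2*c-5
  | .u1 d => 1 ≤ d ∧ d ≤ 2*b-3
  | .u2 d => 1 ≤ d ∧ d ≤ 2*b-3
  | .u3 d => 1 ≤ d ∧ d ≤ 2*b-5

/-- The vertex set of `FCS_{a,b,c}` as a type. -/
abbrev FCSVert (a b c : ℕ) := {v : FCSV // FCSvalid a b c v}

/-- The (oriented) edge list of `FCS_{a,b,c}`. -/
def FCSadj (a b c : ℕ) : FCSV → FCSV → Prop := fun x y =>
  -- path edges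
  (∃ d, 1 ≤ d ∧ d ≤ 2*a-2 ∧ ((x, y) = (.p1 d, .p1 (d+1)) ∨ (x, y) = (.p2 d, .p2 (d+1)))) ∨
  (∃ d, 1 ≤ d ∧ d ≤ 2*c-2 ∧ ((x, y) = (.q1 d, .q1 (d+1)) ∨ (x, y) = (.q2 d, .q2 (d+1)))) ∨
  (∃ d, 1 ≤ d ∧ d ≤ 2*b-2 ∧ ((x, y) = (.r1 d, .r1 (d+1)) ∨ (x, y) = (.r2 d, .r2 (d+1)))) ∨
  (∃ d, 1 ≤ d ∧ d ≤ 2*a-4 ∧ ((x, y) = (.s1 d, .s1 (d+1)) ∨ (x, y) = (.s2 d, .s2 (d+1)))) ∨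
  (∃ d, 1 ≤ d ∧ d ≤ 2*b-4 ∧ ((x, y) = (.u1 d, .u1 (d+1)) ∨ (x, y) = (.t2 d, .t2 (d+1)))) ∨
  (∃ d, 1 ≤ d ∧ d ≤ 2*c-4 ∧ ((x, y) = (.t1 d, .t1 (d+1)) ∨ (x, y) = (.u2 d, .u2 (d+1)))) ∨
  (∃ d, 1 ≤ d ∧ d ≤ 2*a-6 ∧ ((x, y) = (.p3 d, .p3 (d+1)) ∨ (x, y) = (.s3 d, .s3 (d+1)))) ∨
  (∃ d, 1 ≤ d ∧ d ≤ 2*c-6 ∧ ((x, y) = (.q3 d, .q3 (d+1)) ∨ (x, y) = (.t3 d, .t3 (d+1)))) ∨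
  (∃ d, 1 ≤ d ∧ d ≤ 2*b-6 ∧ ((x, y) = (.r3 d, .r3 (d+1)) ∨ (x, y) = (.u3 d, .u3 (d+1)))) ∨
  -- rung edges
  (∃ d, 1 ≤ d ∧ d ≤ a-1 ∧ ((x, y) = (.p1 (2*d), .s1 (2*d-1)) ∨ (x, y) = (.p2 (2*d), .s2 (2*d-1)))) ∨
  (∃ d, 1 ≤ d ∧ d ≤ c-1 ∧ ((x, y) = (.q1 (2*d), .t1 (2*d-1)) ∨ (x, y) = (.q2 (2*d), .u2 (2*d-1)))) ∨
  (∃ d, 1 ≤ d ∧ d ≤ b-1 ∧ ((x, y) = (.r1 (2*d), .u1 (2*d-1)) ∨ (x, y) = (.r2 (2*d), .t2 (2*d-1)))) ∨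
  (∃ d, 1 ≤ d ∧ d ≤ a-2 ∧ (x, y) = (.p3 (2*d-1), .s3 (2*d-1))) ∨
  (∃ d, 1 ≤ d ∧ d ≤ c-2 ∧ (x, y) = (.q3 (2*d-1), .t3 (2*d-1))) ∨
  (∃ d, 1 ≤ d ∧ d ≤ b-2 ∧ (x, y) = (.r3 (2*d-1), .u3 (2*d-1))) ∨
  -- junction edges
  (x, y) = (.p3 1, .r3 1) ∨ (x, y) = (.q3 1, .u3 1) ∨ (x, y) = (.s3 1, .t3 1) ∨
  (x, y) = (.p3 (2*a-5), .t2 (2*c-4)) ∨ (x, y) = (.s3 (2*a-5), .u2 2) ∨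
  (x, y) = (.q3 (2*c-5), .u1 (2*b-4)) ∨ (x, y) = (.t3 (2*c-5), .s2 (2*a-4)) ∨
  (x, y) = (.r3 (2*b-5), .s1 (2*a-4)) ∨ (x, y) = (.u3 (2*b-5), .t1 2) ∨
  (x, y) = (.p1 1, .q2 1) ∨ (x, y) = (.s1 1, .u2 1) ∨
  (x, y) = (.p1 (2*a-1), .q1 1) ∨ (x, y) = (.s1 (2*a-3), .t1 1) ∨
  (x, y) = (.q1 (2*c-1), .r1 1) ∨ (x, y) = (.t1 (2*c-3), .u1 1) ∨
  (x, y) = (.r1 (2*b-1), .p2 (2*a-1)) ∨ (x, y) = (.u1 (2*b-3), .s2 (2*a-3)) ∨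
  (x, y) = (.p2 1, .r2 (2*b-1)) ∨ (x, y) = (.s2 1, .t2 (2*b-3)) ∨
  (x, y) = (.r2 1, .q2 (2*c-1)) ∨ (x, y) = (.t2 1, .u2 (2*c-3))

/-- The zigzag-edge coronoid fused with starphene `FCS_{a,b,c}`. -/
def FCS (a b c : ℕ) : SimpleGraph (FCSVert a b c) :=
  SimpleGraph.fromRel (fun x y => FCSadj a b c x.1 y.1)

/-- `W` is a metric generator (resolving set) for `G`. -/
def IsResolving {α : Type*} (G : SimpleGraph α) (W : Set α) : Prop :=
  ∀ x y : α, x ≠ y → ∃ w ∈ W, G.dist w x ≠ G.dist w y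

/-- The metric dimension of `G`. -/
noncomputable def metricDim {α : Type*} (G : SimpleGraph α) : ℕ :=
  sInf {n | ∃ W : Set α, W.Finite ∧ W.ncard = n ∧ IsResolving G W}

/-- Distance from a vertex to an edge: minimum of the distances to its endpoints. -/
noncomputable def edgeDist {α : Type*} (G : SimpleGraph α) (x : α) (e : Sym2 α) : ℕ :=
  Sym2.lift ⟨fun y z => min (G.dist x y) (G.dist x z), fun _ _ => min_comm _ _⟩ e

/-- `W` is an edge metric generator for `G`. -/
def IsEdgeResolving {α : Type*} (G : SimpleGraph α) (W : Set α) : Prop :=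
  ∀ e ∈ G.edgeSet, ∀ f ∈ G.edgeSet, e ≠ f → ∃ w ∈ W, edgeDist G w e ≠ edgeDist G w f

/-- The edge metric dimension of `G`. -/
noncomputable def edgeMetricDim {α : Type*} (G : SimpleGraph α) : ℕ :=
  sInf {n | ∃ W : Set α, W.Finite ∧ W.ncard = n ∧ IsEdgeResolving G W}

def zabs (x y : ℤ) : ℤ := max (x - y) (y - x)

def potRend (b c : ℕ) : ℤ :=
  if c ≤ b then
    min (2*(b:ℤ)+2*c-4) (min (9 + zabs (2*(b:ℤ)-1) (2*(c:ℤ)-4)) (9 + zabs (2*(b:ℤ)-1) (2*(c:ℤ)-2)))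
  else 2*(b:ℤ)+2*c-4

def potS (b c : ℕ) : ℤ :=
  if b < c then min (2*(b:ℤ)+2*c-1) (potRend b c + 3)
  else if b = c then 9 else potRend b c + 3

def potT (a b c : ℕ) : ℤ := min (potS b c + 2*(a:ℤ)-4) (2*(a:ℤ)+2*(c:ℤ)-4)

def potA1 (a b c : ℕ) : ℤ := min (2*(a:ℤ)+2*(c:ℤ)-5) (potT a b c + 1)

def potP (a b c : ℕ) : ℤ :=
  min (potRend b c + 2*(a:ℤ)-1) (min (potS b c + 2*(a:ℤ)-2) (2*(a:ℤ)+2*(c:ℤ)-2))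

lemma potRend_lt {b c : ℕ} (hbc : b < c) : potRend b c = 2*(b:ℤ)+2*c-4 := by
  simp only [potRend, if_neg (by omega : ¬ c ≤ b)]

lemma potS_lt {b c : ℕ} (hbc : b < c) : potS b c = 2*(b:ℤ)+2*c-1 := by
  simp only [potS, potRend_lt hbc, if_pos hbc]; omega

lemma potT_lt {a b c : ℕ} (hbc : b < c) (hb : 5 ≤ b) : potT a b c = 2*(a:ℤ)+2*c-4 := by
  simp only [potT, potS_lt hbc]; omega

lemma potA1_lt {a b c : ℕ} (hbc : b < c) (hb : 5 ≤ b) : potA1 a b c = 2*(a:ℤ)+2*c-5 := by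
  simp only [potA1, potT_lt hbc hb]; omega

lemma potP_lt {a b c : ℕ} (hbc : b < c) (hb : 5 ≤ b) : potP a b c = 2*(a:ℤ)+2*c-2 := by
  simp only [potP, potS_lt hbc, potRend_lt hbc]; omega

lemma potRend_eqr {b c : ℕ} (hbc : b = c) (hb : 5 ≤ b) : potRend b c = 10 := by
  subst hbc; simp only [potRend, zabs, if_pos (le_refl b)]; omega

lemma potS_eqr {b c : ℕ} (hbc : b = c) (hb : 5 ≤ b) : potS b c = 9 := by
  simp only [potS, if_neg (by omega : ¬ b < c), if_pos hbc]

lemma potT_eqr {a b c : ℕ} (hbc : b = c) (hb : 5 ≤ b) : potT a b c = 2*(a:ℤ)+5 := by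
  simp only [potT, potS_eqr hbc hb]; subst hbc; omega

lemma potA1_eqr {a b c : ℕ} (hbc : b = c) (hb : 5 ≤ b) :
    potA1 a b c = min (2*(a:ℤ)+6) (2*(a:ℤ)+2*(c:ℤ)-5) := by
  simp only [potA1, potT_eqr hbc hb]; omega

lemma potP_eqr {a b c : ℕ} (hbc : b = c) (hb : 5 ≤ b) : potP a b c = 2*(a:ℤ)+7 := by
  simp only [potP, potS_eqr hbc hb, potRend_eqr hbc hb]; subst hbc; omega

lemma potRend_gt {b c : ℕ} (hbc : c < b) (hc : 5 ≤ c) : potRend b c = 2*(b:ℤ)-2*c+10 := by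
  simp only [potRend, zabs, if_pos (by omega : c ≤ b)]; omega

lemma potS_gt {b c : ℕ} (hbc : c < b) (hc : 5 ≤ c) : potS b c = 2*(b:ℤ)-2*c+13 := by
  simp only [potS, potRend_gt hbc hc, if_neg (by omega : ¬ b < c), if_neg (by omega : ¬ b = c)]; ring

lemma potT_gt {a b c : ℕ} (hbc : c < b) (hc : 5 ≤ c) :
    potT a b c = min (2*(a:ℤ)+2*b-2*c+9) (2*(a:ℤ)+2*(c:ℤ)-4) := by
  simp only [potT, potS_gt hbc hc]; omega

lemma potA1_gt {a b c : ℕ} (hbc : c < b) (hc : 5 ≤ c) :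
    potA1 a b c = min (2*(a:ℤ)+2*b-2*c+10) (2*(a:ℤ)+2*(c:ℤ)-5) := by
  simp only [potA1, potT_gt hbc hc]; omega

lemma potP_gt {a b c : ℕ} (hbc : c < b) (hc : 5 ≤ c) :
    potP a b c = min (2*(a:ℤ)+2*b-2*c+9) (2*(a:ℤ)+2*(c:ℤ)-2) := by
  simp only [potP, potS_gt hbc hc, potRend_gt hbc hc]; omega

/-- Distance-from-`p1 1` certificate on labels. -/
def hFCS (a b c : ℕ) : FCSV → ℤ
  | .p1 e => (e:ℤ) - 1
  | .q2 e => (e:ℤ)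
  | .s1 e => (e:ℤ) + 1
  | .u2 e => (e:ℤ) + 2
  | .q1 e => 2*(a:ℤ) - 2 + e
  | .t1 e => 2*(a:ℤ) - 2 + e
  | .s3 e => 2*(a:ℤ) - e
  | .p3 e => 2*(a:ℤ) + 1 - e
  | .r3 e => min (2*(a:ℤ) + e) (2*(a:ℤ) - 5 + zabs e (2*(b:ℤ)-2))
  | .u3 e => min (2*(a:ℤ) + 1 + e) (2*(a:ℤ) - 4 + zabs e (2*(b:ℤ)-2))
  | .t3 e => min (2*(a:ℤ) - 1 + e) (potT a b c + (2*(c:ℤ) - 5 - e))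
  | .q3 e => min (2*(a:ℤ) + e) (potA1 a b c + (2*(c:ℤ) - 5 - e))
  | .t2 e => if c ≤ b then min (7 + zabs e (2*(c:ℤ)-4)) (2*(c:ℤ) - 1 + e)
             else if 2*c-4 ≤ e then 7 + zabs e (2*(c:ℤ)-4) else 2*(c:ℤ) + 1 + e
  | .r2 e => if c ≤ b then
               min (2*(c:ℤ)-1+e) (min (9 + zabs e (2*(c:ℤ)-4)) (9 + zabs e (2*(c:ℤ)-2)))
             else 2*(c:ℤ) - 1 + e
  | .s2 e => min (potS b c + e - 1) (2*(a:ℤ)+2*c-5 + zabs e (2*(a:ℤ)-4))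
  | .p2 e => min (potRend b c + e) (potS b c + e - 1 + if e = 1 then 2 else 0)
  | .u1 e => min (2*(a:ℤ)+2*c-5 + e)
               (min (potA1 a b c + 1 + zabs e (2*(b:ℤ)-4)) (potT a b c + 1 + zabs e (2*(b:ℤ)-3)))
  | .r1 e => min (2*(a:ℤ)+2*c-3 + e)
               (min (potT a b c + 2 + zabs e (2*(b:ℤ)-2))
                 (min (potA1 a b c + 3 + zabs e (2*(b:ℤ)-2)) (potP a b c + 1 + (2*(b:ℤ)-1-e))))

/-- The Lipschitz potential certifying distance lower bounds in `FCS`. -/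
def potFCS (a b c : ℕ) (v : FCSV) : ℤ := max 0 (2*(a:ℤ)+2*(c:ℤ)-3 - hFCS a b c v)
set_option maxHeartbeats 0 in
lemma pot_lip (a b c : ℕ) (ha : 5 ≤ a) (hb : 5 ≤ b) (hc : 5 ≤ c)
    {x y : FCSV} (hx : FCSvalid a b c x) (hy : FCSvalid a b c y)
    (h : FCSadj a b c x y) :
    potFCS a b c x ≤ potFCS a b c y + 1 ∧ potFCS a b c y ≤ potFCS a b c x + 1 := by
  rcases Nat.lt_trichotomy b c with hbc | hbc | hbc
  all_goals simp only [FCSadj] at h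
  all_goals rcases h with ⟨d,h1,h2,h3|h3⟩|⟨d,h1,h2,h3|h3⟩|⟨d,h1,h2,h3|h3⟩|⟨d,h1,h2,h3|h3⟩|
    ⟨d,h1,h2,h3|h3⟩|⟨d,h1,h2,h3|h3⟩|⟨d,h1,h2,h3|h3⟩|⟨d,h1,h2,h3|h3⟩|⟨d,h1,h2,h3|h3⟩|
    ⟨d,h1,h2,h3|h3⟩|⟨d,h1,h2,h3|h3⟩|⟨d,h1,h2,h3|h3⟩|⟨d,h1,h2,h3⟩|⟨d,h1,h2,h3⟩|⟨d,h1,h2,h3⟩|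
    h3|h3|h3|h3|h3|h3|h3|h3|h3|h3|h3|h3|h3|h3|h3|h3|h3|h3|h3|h3|h3
  all_goals (
    rw [Prod.mk.injEq] at h3
    obtain ⟨rfl, rfl⟩ := h3
    simp only [FCSvalid] at hx hy
    first
    | simp only [potFCS, hFCS, zabs, potT_lt hbc hb, potA1_lt hbc hb,
        potP_lt hbc hb, potS_lt hbc, potRend_lt hbc]
    | simp only [potFCS, hFCS, zabs, potT_eqr hbc hb, potA1_eqr hbc hb,
        potP_eqr hbc hb, potS_eqr hbc hb, potRend_eqr hbc hb]
    | simp only [potFCS, hFCS, zabs, potT_gt hbc hc, potA1_gt hbc hc,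
        potP_gt hbc hc, potS_gt hbc hc, potRend_gt hbc hc]
    first
    | (split_ifs <;> constructor <;> omega)
    | (constructor <;> omega))
-- ======================= walks and distance bounds =======================

open SimpleGraph

lemma pot_p1_1 (a b c : ℕ) : potFCS a b c (.p1 1) = max 0 (2*(a:ℤ)+2*(c:ℤ)-3) := by
  simp only [potFCS, hFCS]; omega

lemma pot_t1d (a b c : ℕ) (ha : 5 ≤ a) (hc : 5 ≤ c) (d : ℕ) (hd1 : 1 ≤ d) (hd2 : d ≤ 2*c-3) :
    potFCS a b c (.t1 d) = 2*(c:ℤ) - 1 - d := by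
  simp only [potFCS, hFCS]; omega

lemma pot_u1_2 (a b c : ℕ) (ha : 5 ≤ a) (hb : 5 ≤ b) (hc : 5 ≤ c) :
    potFCS a b c (.u1 2) = 0 := by
  rcases Nat.lt_trichotomy b c with hbc | hbc | hbc
  · simp only [potFCS, hFCS, zabs, potT_lt hbc hb, potA1_lt hbc hb]; omega
  · simp only [potFCS, hFCS, zabs, potT_eqr hbc hb, potA1_eqr hbc hb]; subst hbc; omega
  · simp only [potFCS, hFCS, zabs, potT_gt hbc hc, potA1_gt hbc hc]; omega

lemma pot_r1_2 (a b c : ℕ) (ha : 5 ≤ a) (hb : 5 ≤ b) (hc : 5 ≤ c) :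
    potFCS a b c (.r1 2) = 0 := by
  rcases Nat.lt_trichotomy b c with hbc | hbc | hbc
  · simp only [potFCS, hFCS, zabs, potT_lt hbc hb, potA1_lt hbc hb, potP_lt hbc hb]; omega
  · simp only [potFCS, hFCS, zabs, potT_eqr hbc hb, potA1_eqr hbc hb, potP_eqr hbc hb]
    subst hbc; omega
  · simp only [potFCS, hFCS, zabs, potT_gt hbc hc, potA1_gt hbc hc, potP_gt hbc hc]; omega

lemma pot_walk_bound (a b c : ℕ) (ha : 5 ≤ a) (hb : 5 ≤ b) (hc : 5 ≤ c)
    {x y : FCSVert a b c} (w : (FCS a b c).Walk x y) :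
    potFCS a b c x.1 - potFCS a b c y.1 ≤ (w.length : ℤ) := by
  induction w with
  | nil => simp
  | @cons u v z hadj p ih =>
    have h2 : u ≠ v ∧ (FCSadj a b c u.1 v.1 ∨ FCSadj a b c v.1 u.1) := by
      have := hadj
      unfold FCS at this
      rw [SimpleGraph.fromRel_adj] at this
      exact this
    have hstep : potFCS a b c u.1 ≤ potFCS a b c v.1 + 1 := by
      rcases h2.2 with h3 | h3
      · exact (pot_lip a b c ha hb hc u.2 v.2 h3).1
      · exact (pot_lip a b c ha hb hc v.2 u.2 h3).2
    simp only [SimpleGraph.Walk.length_cons]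
    push_cast
    omega

lemma dist_lower (a b c : ℕ) (ha : 5 ≤ a) (hb : 5 ≤ b) (hc : 5 ≤ c)
    {x y : FCSVert a b c} (hr : (FCS a b c).Reachable x y) :
    potFCS a b c x.1 - potFCS a b c y.1 ≤ ((FCS a b c).dist x y : ℤ) := by
  obtain ⟨w, hw⟩ := hr.exists_walk_length_eq_dist
  calc potFCS a b c x.1 - potFCS a b c y.1 ≤ (w.length : ℤ) :=
        pot_walk_bound a b c ha hb hc w
    _ = _ := by rw [hw]

-- ---------------- adjacency constructors ----------------

lemma FCS_adj_of {a b c : ℕ} {x y : FCSV} (hx : FCSvalid a b c x) (hy : FCSvalid a b c y)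
    (h : FCSadj a b c x y) (hne : x ≠ y) : (FCS a b c).Adj ⟨x, hx⟩ ⟨y, hy⟩ := by
  unfold FCS
  rw [SimpleGraph.fromRel_adj]
  exact ⟨fun hh => hne (congrArg Subtype.val hh), Or.inl h⟩

lemma fadj_p1 (a b c d : ℕ) (h1 : 1 ≤ d) (h2 : d ≤ 2*a-2) :
    FCSadj a b c (.p1 d) (.p1 (d+1)) := Or.inl ⟨d, h1, h2, Or.inl rfl⟩

lemma fadj_s1 (a b c d : ℕ) (h1 : 1 ≤ d) (h2 : d ≤ 2*a-4) :
    FCSadj a b c (.s1 d) (.s1 (d+1)) :=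
  Or.inr (Or.inr (Or.inr (Or.inl ⟨d, h1, h2, Or.inl rfl⟩)))

lemma fadj_u1 (a b c d : ℕ) (h1 : 1 ≤ d) (h2 : d ≤ 2*b-4) :
    FCSadj a b c (.u1 d) (.u1 (d+1)) :=
  Or.inr (Or.inr (Or.inr (Or.inr (Or.inl ⟨d, h1, h2, Or.inl rfl⟩))))

lemma fadj_t1 (a b c d : ℕ) (h1 : 1 ≤ d) (h2 : d ≤ 2*c-4) :
    FCSadj a b c (.t1 d) (.t1 (d+1)) :=
  Or.inr (Or.inr (Or.inr (Or.inr (Or.inr (Or.inl ⟨d, h1, h2, Or.inl rfl⟩)))))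

lemma fadj_p1s1 (a b c : ℕ) (ha : 5 ≤ a) :
    FCSadj a b c (.p1 4) (.s1 3) :=
  Or.inr (Or.inr (Or.inr (Or.inr (Or.inr (Or.inr (Or.inr (Or.inr (Or.inr (Or.inl
    ⟨2, by omega, by omega, Or.inl rfl⟩)))))))))

lemma fadj_r1u1 (a b c : ℕ) (hb : 5 ≤ b) :
    FCSadj a b c (.r1 2) (.u1 1) :=
  Or.inr (Or.inr (Or.inr (Or.inr (Or.inr (Or.inr (Or.inr (Or.inr (Or.inr (Or.inr (Or.inr (Or.inl
    ⟨1, by omega, by omega, Or.inl rfl⟩)))))))))))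

lemma fadj_s1t1 (a b c : ℕ) :
    FCSadj a b c (.s1 (2*a-3)) (.t1 1) :=
  Or.inr (Or.inr (Or.inr (Or.inr (Or.inr (Or.inr (Or.inr (Or.inr (Or.inr (Or.inr (Or.inr (Or.inr
    (Or.inr (Or.inr (Or.inr (Or.inr (Or.inr (Or.inr (Or.inr (Or.inr (Or.inr (Or.inr (Or.inr
    (Or.inr (Or.inr (Or.inr (Or.inr (Or.inl rfl)))))))))))))))))))))))))))

lemma fadj_t1u1 (a b c : ℕ) :
    FCSadj a b c (.t1 (2*c-3)) (.u1 1) :=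
  Or.inr (Or.inr (Or.inr (Or.inr (Or.inr (Or.inr (Or.inr (Or.inr (Or.inr (Or.inr (Or.inr (Or.inr
    (Or.inr (Or.inr (Or.inr (Or.inr (Or.inr (Or.inr (Or.inr (Or.inr (Or.inr (Or.inr (Or.inr
    (Or.inr (Or.inr (Or.inr (Or.inr (Or.inr (Or.inr (Or.inl rfl)))))))))))))))))))))))))))))

-- ---------------- chain walks ----------------

lemma walk_t1_chain (a b c : ℕ) (hc : 5 ≤ c) :
    ∀ k i, 1 ≤ i → i + k ≤ 2*c-3 →
    ∀ (hx : FCSvalid a b c (.t1 i)) (hy : FCSvalid a b c (.t1 (i+k))),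
    ∃ w : (FCS a b c).Walk ⟨_, hx⟩ ⟨_, hy⟩, w.length = k := by
  intro k
  induction k with
  | zero => exact fun i h1 h2 hx hy => ⟨SimpleGraph.Walk.nil, rfl⟩
  | succ k ih =>
    intro i h1 h2 hx hy
    have hy' : FCSvalid a b c (.t1 (i+k)) := by constructor <;> omega
    obtain ⟨w, hw⟩ := ih i h1 (by omega) hx hy'
    have hadj : (FCS a b c).Adj ⟨.t1 (i+k), hy'⟩ ⟨.t1 (i+k+1), hy⟩ :=
      FCS_adj_of _ _ (fadj_t1 a b c (i+k) (by omega) (by omega))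
        (by intro hh; injection hh with h'; omega)
    exact ⟨w.concat hadj, by simp [SimpleGraph.Walk.length_concat, hw]⟩

lemma walk_s1_chain (a b c : ℕ) (ha : 5 ≤ a) :
    ∀ k i, 1 ≤ i → i + k ≤ 2*a-3 →
    ∀ (hx : FCSvalid a b c (.s1 i)) (hy : FCSvalid a b c (.s1 (i+k))),
    ∃ w : (FCS a b c).Walk ⟨_, hx⟩ ⟨_, hy⟩, w.length = k := by
  intro k
  induction k with
  | zero => exact fun i h1 h2 hx hy => ⟨SimpleGraph.Walk.nil, rfl⟩
  | succ k ih =>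
    intro i h1 h2 hx hy
    have hy' : FCSvalid a b c (.s1 (i+k)) := by constructor <;> omega
    obtain ⟨w, hw⟩ := ih i h1 (by omega) hx hy'
    have hadj : (FCS a b c).Adj ⟨.s1 (i+k), hy'⟩ ⟨.s1 (i+k+1), hy⟩ :=
      FCS_adj_of _ _ (fadj_s1 a b c (i+k) (by omega) (by omega))
        (by intro hh; injection hh with h'; omega)
    exact ⟨w.concat hadj, by simp [SimpleGraph.Walk.length_concat, hw]⟩

/-- Walk from `p1 1` to `u1 1` of length `2a+2c-4`. -/
lemma walk_main (a b c : ℕ) (ha : 5 ≤ a) (hb : 5 ≤ b) (hc : 5 ≤ c)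
    (hx : FCSvalid a b c (.p1 1)) (hy : FCSvalid a b c (.u1 1)) :
    ∃ w : (FCS a b c).Walk ⟨_, hx⟩ ⟨_, hy⟩, w.length = 2*a+2*c-4 := by
  have v2 : FCSvalid a b c (.p1 2) := by constructor <;> omega
  have v3 : FCSvalid a b c (.p1 3) := by constructor <;> omega
  have v4 : FCSvalid a b c (.p1 4) := by constructor <;> omega
  have vs3 : FCSvalid a b c (.s1 3) := by constructor <;> omega
  have vsE' : FCSvalid a b c (.s1 (3+(2*a-6))) := by constructor <;> omega
  have vsE : FCSvalid a b c (.s1 (2*a-3)) := by constructor <;> omega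
  have vt1 : FCSvalid a b c (.t1 1) := by constructor <;> omega
  have vtE' : FCSvalid a b c (.t1 (1+(2*c-4))) := by constructor <;> omega
  have vtE : FCSvalid a b c (.t1 (2*c-3)) := by constructor <;> omega
  have a1 : (FCS a b c).Adj ⟨.p1 1, hx⟩ ⟨.p1 2, v2⟩ :=
    FCS_adj_of _ _ (fadj_p1 a b c 1 (by omega) (by omega)) (by intro hh; injection hh; omega)
  have a2 : (FCS a b c).Adj ⟨.p1 2, v2⟩ ⟨.p1 3, v3⟩ :=
    FCS_adj_of _ _ (fadj_p1 a b c 2 (by omega) (by omega)) (by intro hh; injection hh; omega)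
  have a3 : (FCS a b c).Adj ⟨.p1 3, v3⟩ ⟨.p1 4, v4⟩ :=
    FCS_adj_of _ _ (fadj_p1 a b c 3 (by omega) (by omega)) (by intro hh; injection hh; omega)
  have a4 : (FCS a b c).Adj ⟨.p1 4, v4⟩ ⟨.s1 3, vs3⟩ :=
    FCS_adj_of _ _ (fadj_p1s1 a b c ha) (by intro hh; exact FCSV.noConfusion hh)
  obtain ⟨ws, hws⟩ := walk_s1_chain a b c ha (2*a-6) 3 (by omega) (by omega) vs3 vsE'
  have hseq : (⟨.s1 (3+(2*a-6)), vsE'⟩ : FCSVert a b c) = ⟨.s1 (2*a-3), vsE⟩ :=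
    Subtype.ext (congrArg FCSV.s1 (by omega))
  have a5 : (FCS a b c).Adj ⟨.s1 (2*a-3), vsE⟩ ⟨.t1 1, vt1⟩ :=
    FCS_adj_of _ _ (fadj_s1t1 a b c) (by intro hh; exact FCSV.noConfusion hh)
  obtain ⟨wt, hwt⟩ := walk_t1_chain a b c hc (2*c-4) 1 (by omega) (by omega) vt1 vtE'
  have hteq : (⟨.t1 (1+(2*c-4)), vtE'⟩ : FCSVert a b c) = ⟨.t1 (2*c-3), vtE⟩ :=
    Subtype.ext (congrArg FCSV.t1 (by omega))
  have a6 : (FCS a b c).Adj ⟨.t1 (2*c-3), vtE⟩ ⟨.u1 1, hy⟩ :=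
    FCS_adj_of _ _ (fadj_t1u1 a b c) (by intro hh; exact FCSV.noConfusion hh)
  refine ⟨SimpleGraph.Walk.cons a1 (SimpleGraph.Walk.cons a2 (SimpleGraph.Walk.cons a3
    (SimpleGraph.Walk.cons a4 ((ws.copy rfl hseq).append (SimpleGraph.Walk.cons a5
      ((wt.copy rfl hteq).append (SimpleGraph.Walk.cons a6 SimpleGraph.Walk.nil))))))), ?_⟩
  simp [SimpleGraph.Walk.length_cons, SimpleGraph.Walk.length_append,
    SimpleGraph.Walk.length_copy, hws, hwt]
  omega
-- ======================= final assembly =======================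

lemma dist_eqs (a b c : ℕ) (ha : 5 ≤ a) (hb : 5 ≤ b) (hc : 5 ≤ c)
    (hp : FCSvalid a b c (.p1 1)) (hu2 : FCSvalid a b c (.u1 2))
    (hr2 : FCSvalid a b c (.r1 2)) :
    (FCS a b c).dist ⟨.p1 1, hp⟩ ⟨.u1 2, hu2⟩ = 2*a+2*c-3 ∧
    (FCS a b c).dist ⟨.p1 1, hp⟩ ⟨.r1 2, hr2⟩ = 2*a+2*c-3 := by
  have hu1 : FCSvalid a b c (.u1 1) := by constructor <;> omega
  obtain ⟨w0, hw0⟩ := walk_main a b c ha hb hc hp hu1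
  have au : (FCS a b c).Adj ⟨.u1 1, hu1⟩ ⟨.u1 2, hu2⟩ :=
    FCS_adj_of _ _ (fadj_u1 a b c 1 (by omega) (by omega)) (by intro hh; injection hh; omega)
  have ar : (FCS a b c).Adj ⟨.u1 1, hu1⟩ ⟨.r1 2, hr2⟩ :=
    (FCS_adj_of hr2 hu1 (fadj_r1u1 a b c hb) (by intro hh; exact FCSV.noConfusion hh)).symm
  have hwu : (w0.concat au).length = 2*a+2*c-3 := by
    simp [SimpleGraph.Walk.length_concat, hw0]; omega
  have hwr : (w0.concat ar).length = 2*a+2*c-3 := by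
    simp [SimpleGraph.Walk.length_concat, hw0]; omega
  have hub_u : (FCS a b c).dist ⟨.p1 1, hp⟩ ⟨.u1 2, hu2⟩ ≤ 2*a+2*c-3 := by
    calc (FCS a b c).dist _ _ ≤ (w0.concat au).length := SimpleGraph.dist_le _
      _ = 2*a+2*c-3 := hwu
  have hub_r : (FCS a b c).dist ⟨.p1 1, hp⟩ ⟨.r1 2, hr2⟩ ≤ 2*a+2*c-3 := by
    calc (FCS a b c).dist _ _ ≤ (w0.concat ar).length := SimpleGraph.dist_le _
      _ = 2*a+2*c-3 := hwr
  have hlb_u := dist_lower a b c ha hb hc (x := ⟨.p1 1, hp⟩) (y := ⟨.u1 2, hu2⟩) ⟨w0.concat au⟩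
  have hlb_r := dist_lower a b c ha hb hc (x := ⟨.p1 1, hp⟩) (y := ⟨.r1 2, hr2⟩) ⟨w0.concat ar⟩
  rw [pot_p1_1, pot_u1_2 a b c ha hb hc] at hlb_u
  rw [pot_p1_1, pot_r1_2 a b c ha hb hc] at hlb_r
  constructor <;> omega

lemma dist_eqs_t1 (a b c : ℕ) (ha : 5 ≤ a) (hb : 5 ≤ b) (hc : 5 ≤ c)
    (d : ℕ) (hd1 : 1 ≤ d) (hd2 : d ≤ 2*c-3)
    (hp : FCSvalid a b c (.t1 d)) (hu2 : FCSvalid a b c (.u1 2))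
    (hr2 : FCSvalid a b c (.r1 2)) :
    (FCS a b c).dist ⟨.t1 d, hp⟩ ⟨.u1 2, hu2⟩ = 2*c-1-d ∧
    (FCS a b c).dist ⟨.t1 d, hp⟩ ⟨.r1 2, hr2⟩ = 2*c-1-d := by
  have hu1 : FCSvalid a b c (.u1 1) := by constructor <;> omega
  have vtE' : FCSvalid a b c (.t1 (d+(2*c-3-d))) := by constructor <;> omega
  have vtE : FCSvalid a b c (.t1 (2*c-3)) := by constructor <;> omega
  obtain ⟨wt, hwt⟩ := walk_t1_chain a b c hc (2*c-3-d) d hd1 (by omega) hp vtE'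
  have hteq : (⟨.t1 (d+(2*c-3-d)), vtE'⟩ : FCSVert a b c) = ⟨.t1 (2*c-3), vtE⟩ :=
    Subtype.ext (congrArg FCSV.t1 (by omega))
  have a6 : (FCS a b c).Adj ⟨.t1 (2*c-3), vtE⟩ ⟨.u1 1, hu1⟩ :=
    FCS_adj_of _ _ (fadj_t1u1 a b c) (by intro hh; exact FCSV.noConfusion hh)
  have hw0 : ((wt.copy rfl hteq).concat a6).length = 2*c-2-d := by
    simp [SimpleGraph.Walk.length_concat, SimpleGraph.Walk.length_copy, hwt]; omega
  have au : (FCS a b c).Adj ⟨.u1 1, hu1⟩ ⟨.u1 2, hu2⟩ :=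
    FCS_adj_of _ _ (fadj_u1 a b c 1 (by omega) (by omega)) (by intro hh; injection hh; omega)
  have ar : (FCS a b c).Adj ⟨.u1 1, hu1⟩ ⟨.r1 2, hr2⟩ :=
    (FCS_adj_of hr2 hu1 (fadj_r1u1 a b c hb) (by intro hh; exact FCSV.noConfusion hh)).symm
  have hwu : (((wt.copy rfl hteq).concat a6).concat au).length = 2*c-1-d := by
    simp only [SimpleGraph.Walk.length_concat, hw0]; omega
  have hwr : (((wt.copy rfl hteq).concat a6).concat ar).length = 2*c-1-d := by
    simp only [SimpleGraph.Walk.length_concat, hw0]; omega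
  have hub_u : (FCS a b c).dist ⟨.t1 d, hp⟩ ⟨.u1 2, hu2⟩ ≤ 2*c-1-d := by
    calc (FCS a b c).dist _ _ ≤ (((wt.copy rfl hteq).concat a6).concat au).length :=
          SimpleGraph.dist_le _
      _ = 2*c-1-d := hwu
  have hub_r : (FCS a b c).dist ⟨.t1 d, hp⟩ ⟨.r1 2, hr2⟩ ≤ 2*c-1-d := by
    calc (FCS a b c).dist _ _ ≤ (((wt.copy rfl hteq).concat a6).concat ar).length :=
          SimpleGraph.dist_le _
      _ = 2*c-1-d := hwr
  have hlb_u := dist_lower a b c ha hb hc (x := ⟨.t1 d, hp⟩) (y := ⟨.u1 2, hu2⟩)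
    ⟨((wt.copy rfl hteq).concat a6).concat au⟩
  have hlb_r := dist_lower a b c ha hb hc (x := ⟨.t1 d, hp⟩) (y := ⟨.r1 2, hr2⟩)
    ⟨((wt.copy rfl hteq).concat a6).concat ar⟩
  rw [pot_t1d a b c ha hc d hd1 hd2, pot_u1_2 a b c ha hb hc] at hlb_u
  rw [pot_t1d a b c ha hc d hd1 hd2, pot_r1_2 a b c ha hb hc] at hlb_r
  constructor <;> omega
/-- for a, b, c ≥ 5 and `1 ≤ d ≤ 2c-3`, the vertices `u_{1,2}` and `r_{1,2}`
are at equal distance from both `p_{1,1}` and `t_{1,d}`; consequently `{p_{1,1}, t_{1,d}}`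
is not a metric generator for `FCS_{a,b,c}`. -/
theorem statement_18 (a b c : ℕ) (ha : 5 ≤ a) (hb : 5 ≤ b) (hc : 5 ≤ c)
    (d : ℕ) (hd1 : 1 ≤ d) (hd2 : d ≤ 2*c-3) :
    ((FCS a b c).dist ⟨FCSV.u1 2, by constructor <;> omega⟩
        ⟨FCSV.p1 1, by constructor <;> omega⟩ =
      (FCS a b c).dist ⟨FCSV.r1 2, by constructor <;> omega⟩
        ⟨FCSV.p1 1, by constructor <;> omega⟩) ∧
    ((FCS a b c).dist ⟨FCSV.u1 2, by constructor <;> omega⟩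
        ⟨FCSV.t1 d, by constructor <;> omega⟩ =
      (FCS a b c).dist ⟨FCSV.r1 2, by constructor <;> omega⟩
        ⟨FCSV.t1 d, by constructor <;> omega⟩) ∧
    ¬ IsResolving (FCS a b c)
      {⟨FCSV.p1 1, by constructor <;> omega⟩, ⟨FCSV.t1 d, by constructor <;> omega⟩} := by
  have hp : FCSvalid a b c (.p1 1) := by constructor <;> omega
  have ht : FCSvalid a b c (.t1 d) := by constructor <;> omega
  have hu2 : FCSvalid a b c (.u1 2) := by constructor <;> omega
  have hr2 : FCSvalid a b c (.r1 2) := by constructor <;> omega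
  obtain ⟨e1, e2⟩ := dist_eqs a b c ha hb hc hp hu2 hr2
  obtain ⟨e3, e4⟩ := dist_eqs_t1 a b c ha hb hc d hd1 hd2 ht hu2 hr2
  have g1 : (FCS a b c).dist ⟨FCSV.u1 2, hu2⟩ ⟨FCSV.p1 1, hp⟩ =
      (FCS a b c).dist ⟨FCSV.r1 2, hr2⟩ ⟨FCSV.p1 1, hp⟩ := by
    rw [SimpleGraph.dist_comm, e1, SimpleGraph.dist_comm, e2]
  have g2 : (FCS a b c).dist ⟨FCSV.u1 2, hu2⟩ ⟨FCSV.t1 d, ht⟩ =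
      (FCS a b c).dist ⟨FCSV.r1 2, hr2⟩ ⟨FCSV.t1 d, ht⟩ := by
    rw [SimpleGraph.dist_comm, e3, SimpleGraph.dist_comm, e4]
  refine ⟨g1, g2, ?_⟩
  intro hres
  obtain ⟨w, hwmem, hwne⟩ := hres ⟨FCSV.u1 2, hu2⟩ ⟨FCSV.r1 2, hr2⟩
    (by intro hh; exact FCSV.noConfusion (congrArg Subtype.val hh))
  rcases hwmem with h | h
  · subst h
    exact hwne (by rw [e1, e2])
  · rw [Set.mem_singleton_iff] at h
    subst h
    exact hwne (by rw [e3, e4])
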